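/- (Welch bound) Let m ≥ 1 and n > m, and let v_1, …, v_n be unit vectors in ℂ^m (at least two of them). Then max_{i ≠ j} |⟨v_i, v_j⟩| ≥ √((n − m)/(m·(n − 1))); i.e., the coherence of any m × n complex matrix with unit-norm columns is at least √((n − m)/(m·(n − 1))). -/

import Mathlib

open scoped ComplexInnerProductSpace

private lemma sum4_comm {n m : ℕ} (f : Fin n → Fin n → Fin m → Fin m → ℂ) :
    ∑ i, ∑ j, ∑ a, ∑ b, f i j a b = ∑ a, ∑ b, ∑ i, ∑ j, f i j a b := by
  rw [show (∑ i, ∑ j, ∑ a, ∑ b, f i j a b) = ∑ i, ∑ a, ∑ j, ∑ b, f i j a b from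
    Finset.sum_congr rfl fun i _ => Finset.sum_comm, Finset.sum_comm]
  refine Finset.sum_congr rfl fun a _ => ?_
  rw [show (∑ i, ∑ j, ∑ b, f i j a b) = ∑ i, ∑ b, ∑ j, f i j a b from
    Finset.sum_congr rfl fun i _ => Finset.sum_comm, Finset.sum_comm]

theorem stmt12 (m n : ℕ) (hm : 1 ≤ m) (hmn : m < n)
    (v : Fin n → EuclideanSpace ℂ (Fin m)) (hv : ∀ i, ‖v i‖ = 1) :
    ∃ i j : Fin n, i ≠ j ∧
      Real.sqrt (((n : ℝ) - m) / ((m : ℝ) * ((n : ℝ) - 1))) ≤ ‖⟪v i, v j⟫‖ := by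
  classical
  have hn2 : 2 ≤ n := lt_of_le_of_lt hm hmn
  have hmR : (1 : ℝ) ≤ (m : ℝ) := by exact_mod_cast hm
  have hnR : (2 : ℝ) ≤ (n : ℝ) := by exact_mod_cast hn2
  have hmnR : (m : ℝ) < (n : ℝ) := by exact_mod_cast hmn
  set c : ℝ := ((n : ℝ) - m) / ((m : ℝ) * ((n : ℝ) - 1)) with hc
  set M : Fin m → Fin m → ℂ := fun a b => ∑ i, (starRingEnd ℂ) (v i a) * v i b with hM
  have hip : ∀ i j : Fin n, ⟪v i, v j⟫ = ∑ a, (starRingEnd ℂ) (v i a) * v j a := by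
    intro i j
    simp [PiLp.inner_apply, RCLike.inner_apply]
    exact Finset.sum_congr rfl fun _ _ => mul_comm _ _
  have hconj : ∀ i j : Fin n, (starRingEnd ℂ) ⟪v i, v j⟫ = ⟪v j, v i⟫ := fun i j =>
    inner_conj_symm _ _
  -- the complex identity
  have key : (∑ i, ∑ j, ⟪v i, v j⟫ * (starRingEnd ℂ) ⟪v i, v j⟫)
      = ∑ a, ∑ b, M a b * (starRingEnd ℂ) (M a b) := by
    calc (∑ i, ∑ j, ⟪v i, v j⟫ * (starRingEnd ℂ) ⟪v i, v j⟫)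
        = ∑ i, ∑ j, ∑ a, ∑ b,
            ((starRingEnd ℂ) (v i a) * v j a) * ((starRingEnd ℂ) (v j b) * v i b) := by
          refine Finset.sum_congr rfl fun i _ => Finset.sum_congr rfl fun j _ => ?_
          rw [hconj, hip, hip, Finset.sum_mul_sum]
      _ = ∑ a, ∑ b, ∑ i, ∑ j,
            ((starRingEnd ℂ) (v i a) * v j a) * ((starRingEnd ℂ) (v j b) * v i b) :=
          sum4_comm _
      _ = ∑ a, ∑ b, (∑ i, (starRingEnd ℂ) (v i a) * v i b) *
            (∑ j, v j a * (starRingEnd ℂ) (v j b)) := by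
          refine Finset.sum_congr rfl fun a _ => Finset.sum_congr rfl fun b _ => ?_
          rw [Finset.sum_mul_sum]
          exact Finset.sum_congr rfl fun i _ => Finset.sum_congr rfl fun j _ => by ring
      _ = ∑ a, ∑ b, M a b * (starRingEnd ℂ) (M a b) := by
          refine Finset.sum_congr rfl fun a _ => Finset.sum_congr rfl fun b _ => ?_
          congr 1
          rw [hM, map_sum]
          exact Finset.sum_congr rfl fun i _ => by
            rw [map_mul, RingHomCompTriple.comp_apply, RingHom.id_apply]
  have hre : ∀ z : ℂ, ‖z‖ ^ 2 = (z * (starRingEnd ℂ) z).re := by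
    intro z
    rw [Complex.mul_conj, Complex.ofReal_re, Complex.normSq_eq_norm_sq]
  -- S = Frobenius norm squared of the Gram-type matrix M
  set S : ℝ := ∑ i, ∑ j, ‖⟪v i, v j⟫‖ ^ 2 with hSdef
  have hS : S = ∑ a, ∑ b, ‖M a b‖ ^ 2 := by
    calc S = ∑ i, ∑ j, (⟪v i, v j⟫ * (starRingEnd ℂ) ⟪v i, v j⟫).re := by
            rw [hSdef]
            exact Finset.sum_congr rfl fun i _ => Finset.sum_congr rfl fun j _ => hre _
      _ = (∑ i, ∑ j, ⟪v i, v j⟫ * (starRingEnd ℂ) ⟪v i, v j⟫).re := by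
            simp only [Complex.re_sum]
      _ = (∑ a, ∑ b, M a b * (starRingEnd ℂ) (M a b)).re := by rw [key]
      _ = ∑ a, ∑ b, (M a b * (starRingEnd ℂ) (M a b)).re := by
            simp only [Complex.re_sum]
      _ = ∑ a, ∑ b, ‖M a b‖ ^ 2 :=
            Finset.sum_congr rfl fun a _ => Finset.sum_congr rfl fun b _ => (hre _).symm
  -- diagonal of M
  set r : Fin m → ℝ := fun a => ∑ i, ‖v i a‖ ^ 2 with hr
  have hMaa : ∀ a, M a a = ((r a : ℝ) : ℂ) := by
    intro a
    rw [hM, hr]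
    push_cast
    exact Finset.sum_congr rfl fun i _ => RCLike.conj_mul _
  have hrnn : ∀ a, 0 ≤ r a := fun a => Finset.sum_nonneg fun i _ => sq_nonneg _
  have hnormMaa : ∀ a, ‖M a a‖ = r a := by
    intro a
    rw [hMaa a, Complex.norm_real, Real.norm_eq_abs, abs_of_nonneg (hrnn a)]
  have hsumr : ∑ a, r a = (n : ℝ) := by
    have hcol : ∀ i, ∑ a, ‖v i a‖ ^ 2 = 1 := by
      intro i
      have h := EuclideanSpace.norm_eq (v i)
      rw [hv i] at h
      have hnn : (0 : ℝ) ≤ ∑ a, ‖v i a‖ ^ 2 :=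
        Finset.sum_nonneg fun a _ => sq_nonneg _
      calc ∑ a, ‖v i a‖ ^ 2 = Real.sqrt (∑ a, ‖v i a‖ ^ 2) ^ 2 := (Real.sq_sqrt hnn).symm
        _ = 1 := by rw [← h]; norm_num
    calc ∑ a, r a = ∑ i, ∑ a, ‖v i a‖ ^ 2 := Finset.sum_comm
      _ = ∑ _i : Fin n, (1 : ℝ) := Finset.sum_congr rfl fun i _ => hcol i
      _ = (n : ℝ) := by simp
  -- Cauchy-Schwarz on the diagonal
  have hCS : (n : ℝ) ^ 2 ≤ (m : ℝ) * ∑ a, (r a) ^ 2 := by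
    have := sq_sum_le_card_mul_sum_sq (s := (Finset.univ : Finset (Fin m))) (f := r)
    rw [hsumr] at this
    simpa using this
  have hSlow : (n : ℝ) ^ 2 / (m : ℝ) ≤ S := by
    have hdiagle : ∑ a, (r a) ^ 2 ≤ S := by
      rw [hS]
      refine Finset.sum_le_sum fun a _ => ?_
      have h1 : ‖M a a‖ ^ 2 ≤ ∑ b, ‖M a b‖ ^ 2 :=
        Finset.single_le_sum (f := fun b => ‖M a b‖ ^ 2) (fun b _ => sq_nonneg _)
          (Finset.mem_univ a)
      rw [hnormMaa a] at h1
      exact h1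
    have hmpos : (0 : ℝ) < (m : ℝ) := by linarith
    rw [div_le_iff₀ hmpos]
    calc (n : ℝ) ^ 2 ≤ (m : ℝ) * ∑ a, (r a) ^ 2 := hCS
      _ ≤ S * (m : ℝ) := by rw [mul_comm]; exact mul_le_mul_of_nonneg_right hdiagle hmpos.le
  -- split off the diagonal
  set f : Fin n × Fin n → ℝ := fun p => ‖⟪v p.1, v p.2⟫‖ ^ 2 with hf
  have hdiagsum : ∑ p ∈ (Finset.univ : Finset (Fin n)).diag, f p = (n : ℝ) := by
    have himg : (Finset.univ : Finset (Fin n)).diag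
        = Finset.image (fun i => (i, i)) Finset.univ := by
      ext p
      simp only [Finset.mem_diag, Finset.mem_image, Finset.mem_univ, true_and]
      constructor
      · intro h; exact ⟨p.1, Prod.ext_iff.mpr ⟨rfl, h⟩⟩
      · rintro ⟨i, rfl⟩; rfl
    have h1 : ∑ p ∈ (Finset.univ : Finset (Fin n)).diag, f p = ∑ i, f (i, i) := by
      rw [himg, Finset.sum_image (fun i _ j _ h => congrArg Prod.fst h)]
    rw [h1]
    have : ∀ i : Fin n, f (i, i) = 1 := by
      intro i
      rw [hf]
      simp only
      rw [inner_self_eq_norm_sq_to_K (𝕜 := ℂ) (v i), hv i]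
      norm_num
    simp [this]
  have htotal : ∑ p ∈ (Finset.univ : Finset (Fin n)) ×ˢ Finset.univ, f p = S := by
    rw [Finset.sum_product, hSdef]
  have hoff : ∑ p ∈ (Finset.univ : Finset (Fin n)).offDiag, f p = S - (n : ℝ) := by
    have := Finset.sum_union (f := f)
      (Finset.disjoint_diag_offDiag (Finset.univ : Finset (Fin n)))
    rw [Finset.diag_union_offDiag, htotal, hdiagsum] at this
    linarith
  -- average argument on the off-diagonal
  have hcard : ((Finset.univ : Finset (Fin n)).offDiag.card : ℝ) = (n : ℝ) * (n : ℝ) - n := by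
    rw [Finset.offDiag_card, Finset.card_univ, Fintype.card_fin]
    have hle : n ≤ n * n := Nat.le_mul_of_pos_left n (by omega)
    push_cast [Nat.cast_sub hle]
    ring
  have hne : ((Finset.univ : Finset (Fin n)).offDiag).Nonempty := by
    refine ⟨(⟨0, by omega⟩, ⟨1, by omega⟩), ?_⟩
    rw [Finset.mem_offDiag]
    refine ⟨Finset.mem_univ _, Finset.mem_univ _, ?_⟩
    intro h
    have := congrArg Fin.val h
    simp at this
  have havg : ∑ p ∈ (Finset.univ : Finset (Fin n)).offDiag, (fun _ => c) p
      ≤ ∑ p ∈ (Finset.univ : Finset (Fin n)).offDiag, f p := by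
    rw [Finset.sum_const, nsmul_eq_mul, hcard, hoff]
    have hkey : ((n : ℝ) * n - n) * c = (n : ℝ) ^ 2 / m - n := by
      rw [hc]
      have h1 : (m : ℝ) ≠ 0 := by linarith
      have h2 : (n : ℝ) - 1 ≠ 0 := by linarith
      field_simp
    rw [hkey]
    linarith
  obtain ⟨p, hp, hple⟩ := Finset.exists_le_of_sum_le hne havg
  rw [Finset.mem_offDiag] at hp
  refine ⟨p.1, p.2, hp.2.2, ?_⟩
  have h0 : Real.sqrt c ≤ Real.sqrt (f p) := Real.sqrt_le_sqrt hple
  rw [hf] at h0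
  simpa [Real.sqrt_sq (norm_nonneg _)] using h0
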